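/- Let 𝔽 be a field of characteristic different from 2 and N a finite set. Equip W = (N → 𝔽) × ((N → 𝔽) →ₗ 𝔽) (the space of potentials together with its dual space of currents) with the symplectic form ω((φ, i), (φ', i')) = i'(φ) − i(φ'). (a) For every quadratic form Q on N → 𝔽, the subspace L_Q = {(φ, dQ_φ) | φ : N → 𝔽}, where dQ_φ(χ) = Q(φ + χ) − Q(φ) − Q(χ), is a Lagrangian subspace of W (i.e. L_Q equals its ω-complement), and L_Q has trivial intersection with {0} × ((N → 𝔽) →ₗ 𝔽). (b) Conversely, every Lagrangian subspace L of W whose intersection with {0} × ((N → 𝔽) →ₗ 𝔽) is trivial equals L_Q for a unique quadratic form Q on N → 𝔽. -/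

import Mathlib

/-- The symplectic form on the space `W = (N → F) × ((N → F) →ₗ[F] F)` of
potential–current pairs: `ω((φ, i), (φ', i')) = i'(φ) - i(φ')`. -/
def omegaW {F N : Type*} [Field F]
    (p q : (N → F) × ((N → F) →ₗ[F] F)) : F :=
  q.2 p.1 - p.2 q.1

/-- The subspace `L_Q = {(φ, dQ_φ)}`, where `dQ_φ(χ) = Q(φ+χ) - Q(φ) - Q(χ)`. -/
def graphSet {F N : Type*} [Field F] (Q : QuadraticForm F (N → F)) :
    Set ((N → F) × ((N → F) →ₗ[F] F)) :=
  {p | ∀ χ : N → F, p.2 χ = Q (p.1 + χ) - Q p.1 - Q χ}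

theorem mem_graph {F N : Type*} [Field F] (Q : QuadraticForm F (N → F)) (ψ : N → F) :
    (ψ, Q.polarBilin ψ) ∈ graphSet Q := by
  intro χ
  simp [QuadraticMap.polarBilin_apply_apply, QuadraticMap.polar]

/-- Over a field of characteristic `≠ 2`: (a) for every quadratic form
`Q` on `N → F`, the graph `L_Q` of its differential is a Lagrangian subspace of `W`
(it equals its `ω`-complement) having trivial intersection with `{0} × dual`;
(b) conversely every Lagrangian subspace of `W` with trivial intersection with
`{0} × dual` is `L_Q` for a unique quadratic form `Q`. -/
theorem statement13 {F N : Type*} [Field F] [Fintype N] (h2 : (2 : F) ≠ 0) :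
    (∀ Q : QuadraticForm F (N → F),
      graphSet Q = {w | ∀ v ∈ graphSet Q, omegaW w v = 0} ∧
        ∀ i : (N → F) →ₗ[F] F, ((0 : N → F), i) ∈ graphSet Q → i = 0) ∧
      ∀ L : Submodule F ((N → F) × ((N → F) →ₗ[F] F)),
        (L : Set ((N → F) × ((N → F) →ₗ[F] F))) = {w | ∀ v ∈ L, omegaW w v = 0} →
        (∀ i : (N → F) →ₗ[F] F, ((0 : N → F), i) ∈ L → i = 0) →
        ∃! Q : QuadraticForm F (N → F),
          (L : Set ((N → F) × ((N → F) →ₗ[F] F))) = graphSet Q := by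
  constructor
  · intro Q
    constructor
    · ext w
      constructor
      · intro hw v hv
        simp only [omegaW, hw v.1, hv w.1]
        rw [add_comm v.1 w.1]
        ring
      · intro hw χ
        have h := hw (χ, Q.polarBilin χ) (mem_graph Q χ)
        simp only [omegaW, QuadraticMap.polarBilin_apply_apply, QuadraticMap.polar] at h
        rw [add_comm w.1 χ]
        linear_combination -h
    · intro i hi
      refine LinearMap.ext fun χ => ?_
      have := hi χ
      simpa using this
  · intro L hL hL0
    classical
    set p : L →ₗ[F] (N → F) :=
      (LinearMap.fst F (N → F) ((N → F) →ₗ[F] F)).comp L.subtype with hp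
    have hvzero : ∀ v : L, (v : (N → F) × ((N → F) →ₗ[F] F)).1 = 0 → v = 0 := by
      intro v hv1
      have hmem : ((0 : N → F), (v : (N → F) × ((N → F) →ₗ[F] F)).2) ∈ L := by
        have hv' : ((v : (N → F) × ((N → F) →ₗ[F] F)).1,
            (v : (N → F) × ((N → F) →ₗ[F] F)).2) ∈ L := v.2
        rwa [hv1] at hv'
      have h2v := hL0 _ hmem
      apply Subtype.ext
      rw [Prod.ext_iff]
      exact ⟨hv1, h2v⟩
    have hinj : Function.Injective p := by
      rw [injective_iff_map_eq_zero]
      intro v hv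
      exact hvzero v hv
    have hsurj : Function.Surjective p := by
      intro φ
      set h : L →ₗ[F] F :=
        (LinearMap.applyₗ φ).comp
          ((LinearMap.snd F (N → F) ((N → F) →ₗ[F] F)).comp L.subtype) with hh
      let e := LinearEquiv.ofInjective p hinj
      obtain ⟨i, hi⟩ := LinearMap.exists_extend (h.comp e.symm.toLinearMap)
      have hmemL : (φ, i) ∈ L := by
        have : (φ, i) ∈ (L : Set ((N → F) × ((N → F) →ₗ[F] F))) := by
          rw [hL]
          intro v hv
          have hv1 : v.1 ∈ LinearMap.range p := ⟨⟨v, hv⟩, rfl⟩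
          have hiv : i v.1 = h (e.symm ⟨v.1, hv1⟩) := by
            have := LinearMap.congr_fun hi ⟨v.1, hv1⟩
            simpa using this
          have hesym : e.symm ⟨v.1, hv1⟩ = ⟨v, hv⟩ := by
            rw [LinearEquiv.symm_apply_eq]
            apply Subtype.ext
            rw [LinearEquiv.ofInjective_apply]
            rfl
          simp only [omegaW, hiv, hesym]
          show v.2 φ - v.2 φ = 0
          ring
        exact this
      exact ⟨⟨(φ, i), hmemL⟩, rfl⟩
    let e₂ : L ≃ₗ[F] (N → F) := LinearEquiv.ofBijective p ⟨hinj, hsurj⟩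
    set f : (N → F) →ₗ[F] ((N → F) →ₗ[F] F) :=
      ((LinearMap.snd F (N → F) ((N → F) →ₗ[F] F)).comp L.subtype).comp
        e₂.symm.toLinearMap with hf
    have hmemf : ∀ φ : N → F, (φ, f φ) ∈ L := by
      intro φ
      have h1 : ((e₂.symm φ : L) : (N → F) × ((N → F) →ₗ[F] F)).1 = φ := by
        have := e₂.apply_symm_apply φ
        exact this
      have : (φ, f φ) = ((e₂.symm φ : L) : (N → F) × ((N → F) →ₗ[F] F)) := by
        apply Prod.ext
        · exact h1.symm
        · rfl
      rw [this]
      exact (e₂.symm φ).2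
    have huniq : ∀ w ∈ L, w.2 = f w.1 := by
      intro w hw
      have hdiff : (w.1, f w.1) - w ∈ L := L.sub_mem (hmemf w.1) hw
      have : ((0 : N → F), f w.1 - w.2) ∈ L := by
        simpa [Prod.sub_def, sub_self] using hdiff
      have := hL0 _ this
      rw [sub_eq_zero] at this
      exact this.symm
    have hsymm : ∀ φ ψ : N → F, f φ ψ = f ψ φ := by
      intro φ ψ
      have h1 := hmemf φ
      have h2' := hmemf ψ
      have hiso : ∀ w ∈ L, ∀ v ∈ L, omegaW w v = 0 := by
        intro w hw v hv
        have : w ∈ {w | ∀ v ∈ L, omegaW w v = 0} := by rw [← hL]; exact hw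
        exact this v hv
      have := hiso _ h1 _ h2'
      simp only [omegaW] at this
      linear_combination -this
    set Q : QuadraticForm F (N → F) := (2⁻¹ : F) • (LinearMap.BilinMap.toQuadraticMap f)
      with hQ
    have hQval : ∀ φ, Q φ = 2⁻¹ * f φ φ := by
      intro φ; simp [hQ, LinearMap.BilinMap.toQuadraticMap_apply, smul_eq_mul]
    have hkey : ∀ φ χ : N → F, Q (φ + χ) - Q φ - Q χ = f φ χ := by
      intro φ χ
      rw [hQval, hQval, hQval]
      simp only [map_add, LinearMap.add_apply]
      rw [hsymm χ φ]
      field_simp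
      ring
    have hLQ : (L : Set ((N → F) × ((N → F) →ₗ[F] F))) = graphSet Q := by
      ext w
      simp only [graphSet, Set.mem_setOf_eq, SetLike.mem_coe]
      constructor
      · intro hw χ
        rw [hkey, huniq w hw]
      · intro hw
        have : w.2 = f w.1 := by
          refine LinearMap.ext fun χ => ?_
          rw [hw χ, hkey]
        have : w = (w.1, f w.1) := by rw [← this]
        rw [this]
        exact hmemf w.1
    refine ⟨Q, hLQ, ?_⟩
    · intro Q' hQ'
      have hgg : graphSet Q' = graphSet Q := hQ'.symm.trans hLQ
      ext φ
      have hm : (φ, Q'.polarBilin φ) ∈ graphSet Q := by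
        rw [← hgg]; exact mem_graph Q' φ
      have hpol : ∀ ψ, QuadraticMap.polar Q' φ ψ = QuadraticMap.polar Q φ ψ := by
        intro ψ
        have := hm ψ
        simpa [QuadraticMap.polarBilin_apply_apply, QuadraticMap.polar] using this
      have hval : ∀ (R : QuadraticForm F (N → F)), R φ = 2⁻¹ * QuadraticMap.polar R φ φ := by
        intro R
        have h4 : R (φ + φ) = 2 * 2 * R φ := by
          rw [show φ + φ = (2 : F) • φ from (two_smul F φ).symm, QuadraticMap.map_smul,
            smul_eq_mul]
        simp only [QuadraticMap.polar, h4]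
        field_simp
        ring
      rw [hval Q', hval Q, hpol]
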